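/- Let p and q be coprime integers with q ≥ 1, let T = (ℝ/ℤ) × (ℝ/ℤ) be the 2-torus, and let r : T → T be the rotation r(x, y) = (x + p/q, y). Suppose c : ℝ/ℤ → T is a continuous injective loop (a simple closed curve) whose image is invariant under r, i.e. r maps the image of c onto itself. Let c̃ : ℝ → ℝ² be any continuous lift of c, i.e. π ∘ c̃ = c ∘ π₀ where π : ℝ² → T and π₀ : ℝ → ℝ/ℤ are the quotient maps, and write c̃(1) − c̃(0) = (k, l) ∈ ℤ × ℤ. Then q divides l. -/

import Mathlib

noncomputable def TorusAux.rep (z : UnitAddCircle) : ℝ :=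
  (AddCircle.equivIco 1 (-(1/2) : ℝ) z : ℝ)

namespace TorusAux

lemma rep_mem (z : UnitAddCircle) : rep z ∈ Set.Ico (-(1/2) : ℝ) (1/2) := by
  have h := (AddCircle.equivIco 1 (-(1/2) : ℝ) z).2
  norm_num at h ⊢
  exact h

lemma rep_coe (z : UnitAddCircle) : ((rep z : ℝ) : UnitAddCircle) = z :=
  (AddCircle.equivIco 1 (-(1/2) : ℝ)).symm_apply_apply z

lemma rep_eq {t : ℝ} (ht : t ∈ Set.Ico (-(1/2) : ℝ) (1/2)) :
    rep ((t : ℝ) : UnitAddCircle) = t := by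
  have ht' : t ∈ Set.Ico (-(1/2) : ℝ) (-(1/2) + 1) := by norm_num at ht ⊢; exact ht
  have h2 : (AddCircle.equivIco 1 (-(1/2) : ℝ)) ((t : ℝ) : UnitAddCircle) = ⟨t, ht'⟩ :=
    (AddCircle.equivIco 1 (-(1/2) : ℝ)).apply_symm_apply ⟨t, ht'⟩
  unfold rep
  rw [h2]

lemma abs_rep (z : UnitAddCircle) : |rep z| = ‖z‖ := by
  have h := rep_mem z
  have h2 : ‖((rep z : ℝ) : UnitAddCircle)‖ = |rep z| := by
    rw [AddCircle.norm_coe_eq_abs_iff 1 one_ne_zero, abs_one, abs_le]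
    constructor <;> [linarith [h.1]; linarith [h.2]]
  rw [rep_coe] at h2
  exact h2.symm

lemma norm_coe_le (x : ℝ) : ‖((x : ℝ) : UnitAddCircle)‖ ≤ |x| := by
  rcases le_or_gt (|x|) (1/2) with h | h
  · rw [(AddCircle.norm_coe_eq_abs_iff 1 one_ne_zero).2 (by rwa [abs_one])]
  · calc ‖((x:ℝ) : UnitAddCircle)‖ ≤ |(1:ℝ)|/2 := AddCircle.norm_le_half_period 1 one_ne_zero
      _ ≤ |x| := by rw [abs_one]; linarith

lemma rep_unique {t : ℝ} {z : UnitAddCircle} (ht : t ∈ Set.Ico (-(1/2) : ℝ) (1/2))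
    (h : ((t : ℝ) : UnitAddCircle) = z) : rep z = t := by
  rw [← h, rep_eq ht]

lemma continuousAt_rep {z : UnitAddCircle} (hz : z ≠ (((-(1/2) : ℝ)) : UnitAddCircle)) :
    ContinuousAt rep z := by
  exact continuousAt_subtype_val.comp (AddCircle.continuousAt_equivIco 1 (-(1/2)) hz)

end TorusAux

namespace TorusAux

lemma int_coe_zero (n : ℤ) : (((n : ℝ)) : UnitAddCircle) = 0 := by
  rw [AddCircle.coe_eq_zero_iff]
  exact ⟨n, by simp⟩

lemma coe_zero_iff (t : ℝ) : ((t : ℝ) : UnitAddCircle) = 0 ↔ ∃ n : ℤ, t = (n : ℝ) := by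
  rw [AddCircle.coe_eq_zero_iff]
  constructor
  · rintro ⟨n, hn⟩; exact ⟨n, by simpa using hn.symm⟩
  · rintro ⟨n, hn⟩; exact ⟨n, by simp [hn]⟩

lemma const_of_int {f : ℝ → ℝ} (hf : Continuous f) (hfz : ∀ x, ∃ n : ℤ, f x = n) :
    ∀ x, f x = f 0 := by
  intro x
  by_contra hne
  obtain ⟨n, hn⟩ := hfz x
  obtain ⟨m, hm⟩ := hfz 0
  have hsub : Set.uIcc (f 0) (f x) ⊆ f '' Set.uIcc 0 x :=
    intermediate_value_uIcc hf.continuousOn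
  have hmem : min (f 0) (f x) + 1/2 ∈ Set.uIcc (f 0) (f x) := by
    rw [Set.mem_uIcc]
    have h1 : (1:ℝ) ≤ |f x - f 0| := by
      have : f x - f 0 ≠ 0 := sub_ne_zero.2 hne
      rw [hn, hm, ← Int.cast_sub] at this ⊢
      rw [← Int.cast_abs]
      exact_mod_cast Int.one_le_abs (by exact_mod_cast fun h => this (by rw [h]; simp))
    rcases le_total (f 0) (f x) with h | h
    · left; constructor <;> [simp [min_eq_left h]; (rw [min_eq_left h, abs_of_nonneg (by linarith)] at *; linarith)]
    · right; constructor <;> [simp [min_eq_right h]; (rw [min_eq_right h, abs_of_nonpos (by linarith)] at *; linarith)]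
  obtain ⟨z, _, hz⟩ := hsub hmem
  obtain ⟨nz, hnz⟩ := hfz z
  have hb : ∃ b : ℤ, min (f 0) (f x) = (b : ℝ) := by
    rcases le_total (f 0) (f x) with h | h
    · exact ⟨m, by rw [min_eq_left h, hm]⟩
    · exact ⟨n, by rw [min_eq_right h, hn]⟩
  obtain ⟨b, hbe⟩ := hb
  rw [hnz, hbe] at hz
  have : (2*nz : ℤ) = 2*b + 1 := by exact_mod_cast (by linarith : (2*nz:ℝ) = 2*b+1)
  omega

lemma uniformContinuous_coe : UniformContinuous (fun x : ℝ => ((x : ℝ) : UnitAddCircle)) := by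
  refine LipschitzWith.uniformContinuous (LipschitzWith.of_dist_le_mul (K := 1) ?_)
  intro x y
  rw [dist_eq_norm, ← AddCircle.coe_sub, Real.dist_eq]
  simpa using norm_coe_le (x - y)

end TorusAux

namespace TorusAux

lemma half_ne_zero' : (((-(1/2) : ℝ)) : UnitAddCircle) ≠ 0 := by
  intro h
  obtain ⟨n, hn⟩ := (coe_zero_iff _).1 h
  have : (2 * n : ℝ) = -1 := by linarith
  have : (2 * n : ℤ) = -1 := by exact_mod_cast this
  omega

lemma exists_lift (g : ℝ → UnitAddCircle) (hg : UniformContinuous g) :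
    ∃ ψ : ℝ → ℝ, Continuous ψ ∧ ∀ x, ((ψ x : ℝ) : UnitAddCircle) = g x := by
  obtain ⟨ε, hε, hmod⟩ : ∃ ε > 0, ∀ {x y : ℝ}, dist x y < ε → dist (g x) (g y) < 1/8 :=
    Metric.uniformContinuous_iff.1 hg (1/8) (by norm_num)
  obtain ⟨N, hN⟩ := exists_nat_one_div_lt hε
  obtain ⟨M, hM0, hMε⟩ : ∃ M : ℝ, 0 < M ∧ 1 / M < ε := ⟨(N : ℝ) + 1, by positivity, hN⟩
  -- increments
  set δ : ℤ → ℝ := fun i => rep (g ((i + 1) / M) - g (i / M)) with hδ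
  clear_value δ
  have hδcoe : ∀ i : ℤ, ((δ i : ℝ) : UnitAddCircle) = g ((i + 1) / M) - g (i / M) :=
    fun i => by rw [hδ]; exact rep_coe _
  have hδabs : ∀ i : ℤ, |δ i| < 1/8 := by
    intro i
    rw [hδ]
    have hd : ((i:ℝ) + 1) / M - (i:ℝ) / M = 1 / M := by field_simp; ring
    have hdist : dist (((i:ℝ) + 1) / M) ((i : ℝ) / M) < ε := by
      rw [Real.dist_eq, hd, abs_of_pos (by positivity)]
      exact hMε
    calc |rep (g (((i:ℝ) + 1) / M) - g ((i:ℝ) / M))|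
        = ‖g (((i:ℝ)+1)/M) - g ((i:ℝ)/M)‖ := abs_rep _
      _ = dist (g (((i:ℝ)+1)/M)) (g ((i:ℝ)/M)) := (dist_eq_norm _ _).symm
      _ < 1/8 := hmod hdist
  -- cumulative sums
  set A : ℤ → ℝ := fun i =>
    (∑ j ∈ Finset.range i.toNat, δ j) - ∑ j ∈ Finset.range (-i).toNat, δ (-1 - j) with hAdef
  clear_value A
  have hA : ∀ i : ℤ, A (i + 1) = A i + δ i := by
    intro i
    simp only [hAdef]
    rcases le_or_gt 0 i with h | h
    · have h1 : (i + 1).toNat = i.toNat + 1 := by omega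
      have h2 : (-i).toNat = 0 := by omega
      have h3 : (-(i + 1)).toNat = 0 := by omega
      have h4 : ((i.toNat : ℤ)) = i := by omega
      rw [h1, h2, h3, Finset.sum_range_succ, h4, Finset.range_zero, Finset.sum_empty]
      ring
    · have h1 : (i + 1).toNat = 0 := by omega
      have h2 : i.toNat = 0 := by omega
      have h3 : (-i).toNat = (-(i + 1)).toNat + 1 := by omega
      have h4 : (-1 - ((-(i+1)).toNat : ℤ)) = i := by omega
      rw [h1, h2, h3, Finset.sum_range_succ, h4, Finset.range_zero, Finset.sum_empty]
      ring
  have hA0 : A 0 = 0 := by simp [hAdef]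
  have hAcoe : ∀ i : ℤ, ((A i : ℝ) : UnitAddCircle) = g (i / M) - g 0 := by
    intro i
    induction i using Int.induction_on with
    | zero => rw [hA0]; simp
    | succ n ih =>
        rw [hA, AddCircle.coe_add, ih, hδcoe]
        push_cast
        abel
    | pred n ih =>
        have heq : A (-(n : ℤ) - 1) = A (-(n:ℤ)) - δ (-(n:ℤ) - 1) := by
          have h5 := hA (-(n:ℤ) - 1)
          rw [show (-(n:ℤ) - 1 + 1) = -(n:ℤ) by ring] at h5
          linarith
        have harg : (((-(n:ℤ) - 1 : ℤ) : ℝ) + 1) = ((-(n:ℤ) : ℤ) : ℝ) := by push_cast; ring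
        rw [heq, AddCircle.coe_sub, ih, hδcoe, harg]
        abel
  -- the lift (up to constant)
  set ψ : ℝ → ℝ := fun x => A ⌊M * x⌋ + rep (g x - g (⌊M * x⌋ / M)) with hψdef
  clear_value ψ
  have hfloor : ∀ x : ℝ, |x - (⌊M * x⌋ : ℝ) / M| < 1 / M := by
    intro x
    have h1 : (⌊M * x⌋ : ℝ) ≤ M * x := Int.floor_le _
    have h2 : M * x < ⌊M * x⌋ + 1 := Int.lt_floor_add_one _
    rw [abs_lt]
    constructor
    · have : (⌊M * x⌋ : ℝ) / M ≤ x := by rw [div_le_iff₀ hM0]; linarith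
      have hpos : (0:ℝ) < 1 / M := by positivity
      linarith
    · rw [sub_lt_iff_lt_add, ← add_div, lt_div_iff₀ hM0]
      linarith
  have hrepg : ∀ x : ℝ, |rep (g x - g ((⌊M * x⌋ : ℝ) / M))| < 1/8 := by
    intro x
    rw [abs_rep, ← dist_eq_norm]
    exact hmod (lt_trans (by simpa [Real.dist_eq] using hfloor x) hMε)
  have hψcoe : ∀ x, ((ψ x : ℝ) : UnitAddCircle) = g x - g 0 := by
    intro x
    simp only [hψdef]
    rw [AddCircle.coe_add, hAcoe, rep_coe]
    abel
  -- local rigidity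
  have hloc : ∀ x y : ℝ, |x - y| ≤ 1 / (2 * M) → ψ x - ψ y = rep (g x - g y) := by
    intro x y hxy
    have hij : ⌊M * x⌋ = ⌊M * y⌋ ∨ ⌊M * x⌋ = ⌊M * y⌋ + 1 ∨ ⌊M * y⌋ = ⌊M * x⌋ + 1 := by
      have hb : M * x - M * y ≤ 1/2 ∧ M * y - M * x ≤ 1/2 := by
        constructor
        · calc M * x - M * y = M * (x - y) := by ring
            _ ≤ |M * (x - y)| := le_abs_self _
            _ = M * |x - y| := by rw [abs_mul, abs_of_pos hM0]
            _ ≤ M * (1 / (2 * M)) := by nlinarith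
            _ = 1/2 := by field_simp
        · calc M * y - M * x = M * (y - x) := by ring
            _ ≤ |M * (y - x)| := le_abs_self _
            _ = M * |y - x| := by rw [abs_mul, abs_of_pos hM0]
            _ ≤ M * (1 / (2 * M)) := by rw [abs_sub_comm] at hxy; nlinarith
            _ = 1/2 := by field_simp
      have hi1 : (⌊M * x⌋ : ℝ) ≤ M * x := Int.floor_le _
      have hi2 : M * x < ⌊M * x⌋ + 1 := Int.lt_floor_add_one _
      have hj1 : (⌊M * y⌋ : ℝ) ≤ M * y := Int.floor_le _
      have hj2 : M * y < ⌊M * y⌋ + 1 := Int.lt_floor_add_one _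
      have c1 : (⌊M * x⌋ : ℝ) < ⌊M * y⌋ + 2 := by linarith [hb.1]
      have c2 : (⌊M * y⌋ : ℝ) < ⌊M * x⌋ + 2 := by linarith [hb.2]
      have c1' : ⌊M * x⌋ < ⌊M * y⌋ + 2 := by exact_mod_cast c1
      have c2' : ⌊M * y⌋ < ⌊M * x⌋ + 2 := by exact_mod_cast c2
      omega
    have hAij : |A ⌊M * x⌋ - A ⌊M * y⌋| < 1/8 := by
      rcases hij with h | h | h
      · rw [h, sub_self, abs_zero]; norm_num
      · rw [h]
        have := hA ⌊M * y⌋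
        rw [show A (⌊M * y⌋ + 1) - A ⌊M * y⌋ = δ ⌊M * y⌋ by linarith]
        exact hδabs _
      · have := hA ⌊M * x⌋
        rw [show A ⌊M * x⌋ - A ⌊M * y⌋ = -(δ ⌊M * x⌋) by rw [h]; linarith]
        rw [abs_neg]
        exact hδabs _
    have hdiff : |ψ x - ψ y| < 1/2 := by
      have hexp : ψ x - ψ y = (A ⌊M * x⌋ - A ⌊M * y⌋) +
          (rep (g x - g (⌊M * x⌋ / M)) - rep (g y - g (⌊M * y⌋ / M))) := by
        simp only [hψdef]; ring
      rw [hexp]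
      calc |(A ⌊M * x⌋ - A ⌊M * y⌋) + (rep (g x - g (⌊M * x⌋ / M)) - rep (g y - g (⌊M * y⌋ / M)))|
          ≤ |A ⌊M * x⌋ - A ⌊M * y⌋| + |rep (g x - g (⌊M * x⌋ / M)) - rep (g y - g (⌊M * y⌋ / M))| :=
            abs_add_le _ _
        _ ≤ |A ⌊M * x⌋ - A ⌊M * y⌋| + (|rep (g x - g (⌊M * x⌋ / M))| + |rep (g y - g (⌊M * y⌋ / M))|) := by
            linarith [abs_sub (rep (g x - g (⌊M * x⌋ / M))) (rep (g y - g (⌊M * y⌋ / M)))]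
        _ < 1/8 + (1/8 + 1/8) := by linarith [hrepg x, hrepg y]
        _ < 1/2 := by norm_num
    -- the difference is an integer plus rep, and small
    set u : ℝ := ψ x - ψ y - rep (g x - g y) with hu
    have hucoe : ((u : ℝ) : UnitAddCircle) = 0 := by
      rw [hu, AddCircle.coe_sub, AddCircle.coe_sub, hψcoe, hψcoe, rep_coe]
      abel
    obtain ⟨n, hn⟩ := (coe_zero_iff u).1 hucoe
    have hrb := rep_mem (g x - g y)
    have h1 : |u| < 1 := by
      rw [hu]
      have := abs_sub (ψ x - ψ y) (rep (g x - g y))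
      have h2 : |rep (g x - g y)| ≤ 1/2 := by
        rw [abs_le]; constructor
        · linarith [hrb.1]
        · linarith [hrb.2]
      calc |ψ x - ψ y - rep (g x - g y)| ≤ |ψ x - ψ y| + |rep (g x - g y)| :=
            abs_sub _ _
        _ < 1/2 + 1/2 := by linarith
        _ = 1 := by norm_num
    have hn0 : n = 0 := by
      rw [hn] at h1
      have h3 := abs_lt.1 h1
      have h4 : (-1 : ℤ) < n := by exact_mod_cast h3.1
      have h5 : n < 1 := by exact_mod_cast h3.2
      omega
    rw [hn0] at hn
    rw [hu] at hn
    norm_num at hn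
    linarith
  -- continuity
  have hcont : Continuous ψ := by
    rw [continuous_iff_continuousAt]
    intro x₀
    have h0 : (0 : UnitAddCircle) ≠ (((-(1/2) : ℝ)) : UnitAddCircle) := fun h => half_ne_zero' h.symm
    have hrepc : ContinuousAt rep (g x₀ - g x₀) := by
      rw [sub_self]; exact continuousAt_rep h0
    have hsub : ContinuousAt (fun x => g x - g x₀) x₀ :=
      (hg.continuous.sub continuous_const).continuousAt
    have hcomp : ContinuousAt (fun x => rep (g x - g x₀)) x₀ := ContinuousAt.comp (g := rep) hrepc hsub
    have hcr : ContinuousAt (fun x => ψ x₀ + rep (g x - g x₀)) x₀ :=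
      continuousAt_const.add hcomp
    refine hcr.congr ?_
    have hmem : Metric.ball x₀ (1 / (2 * M)) ∈ nhds x₀ := Metric.ball_mem_nhds x₀ (by positivity)
    refine Filter.eventuallyEq_of_mem hmem fun x hx => ?_
    have hle : |x - x₀| ≤ 1 / (2 * M) := le_of_lt (by simpa [Real.dist_eq] using hx)
    have h7 := hloc x x₀ hle
    show ψ x₀ + rep (g x - g x₀) = ψ x
    linarith
  refine ⟨fun x => ψ x + rep (g 0), (hcont.add continuous_const), fun x => ?_⟩
  rw [AddCircle.coe_add, hψcoe, rep_coe]
  abel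

end TorusAux

/-- Let `p, q` be coprime integers with `q ≥ 1`, let
`T = (ℝ/ℤ) × (ℝ/ℤ)` be the 2-torus and `r : T → T` the rotation
`r (x, y) = (x + p/q, y)`.  If `c : ℝ/ℤ → T` is a continuous injective loop
whose image is invariant under `r`, and `c̃ : ℝ → ℝ²` is a continuous lift of
`c` with `c̃ 1 - c̃ 0 = (k, l) ∈ ℤ × ℤ`, then `q ∣ l`. -/
theorem torus_invariant_curve_homology_class
    (p q : ℤ) (hq : 1 ≤ q) (hpq : Int.gcd p q = 1)
    (c : UnitAddCircle → UnitAddCircle × UnitAddCircle)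
    (hc_cont : Continuous c) (hc_inj : Function.Injective c)
    (hinv :
      (fun z : UnitAddCircle × UnitAddCircle =>
          (z.1 + (((p : ℝ) / (q : ℝ) : ℝ) : UnitAddCircle), z.2)) ''
        Set.range c = Set.range c)
    (ctilde : ℝ → ℝ × ℝ) (hct_cont : Continuous ctilde)
    (hlift : ∀ x : ℝ,
      ((((ctilde x).1 : ℝ) : UnitAddCircle), (((ctilde x).2 : ℝ) : UnitAddCircle))
        = c ((x : ℝ) : UnitAddCircle))
    (k l : ℤ) (hkl : ctilde 1 - ctilde 0 = ((k : ℝ), (l : ℝ))) :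
    q ∣ l := by
  classical
  open TorusAux in
  set α : UnitAddCircle := (((p : ℝ) / (q : ℝ) : ℝ) : UnitAddCircle) with hα
  set r : UnitAddCircle × UnitAddCircle → UnitAddCircle × UnitAddCircle :=
    fun z => (z.1 + α, z.2) with hr
  have hq0 : (q : ℝ) ≠ 0 := by positivity
  -- the induced circle homeomorphism φ
  have hrange : ∀ t, r (c t) ∈ Set.range c := by
    intro t
    rw [← hinv]
    exact ⟨c t, ⟨t, rfl⟩, rfl⟩
  choose φ hφ using hrange
  have hrcont : Continuous r := by
    rw [hr]
    exact (continuous_fst.add continuous_const).prodMk continuous_snd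
  have hemb : Topology.IsEmbedding c := (hc_cont.isClosedEmbedding hc_inj).toIsEmbedding
  have hφcont : Continuous φ := by
    rw [hemb.continuous_iff]
    have : c ∘ φ = r ∘ c := funext fun t => hφ t
    rw [this]
    exact hrcont.comp hc_cont
  -- iterates of φ
  have hφ' : ∀ t, c (φ t) = ((c t).1 + α, (c t).2) := fun t => hφ t
  have hiter : ∀ (n : ℕ) (t), c (φ^[n] t) =
      ((c t).1 + (((n : ℝ) * ((p : ℝ) / (q : ℝ)) : ℝ) : UnitAddCircle), (c t).2) := by
    intro n
    induction n with
    | zero =>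
        intro t
        simp [Prod.ext_iff]
    | succ n ih =>
        intro t
        rw [Function.iterate_succ_apply', hφ', ih t]
        have : (((n : ℝ) + 1) * ((p : ℝ) / (q : ℝ)) : ℝ) =
            ((n : ℝ) * ((p : ℝ) / (q : ℝ)) : ℝ) + ((p : ℝ) / (q : ℝ)) := by ring
        push_cast
        rw [this, AddCircle.coe_add]
        simp [hα, add_assoc]
  set q' : ℕ := q.toNat with hq'def
  have hq' : ((q' : ℤ)) = q := Int.toNat_of_nonneg (by linarith)
  have hq'R : ((q' : ℝ)) = (q : ℝ) := by exact_mod_cast congrArg (Int.cast : ℤ → ℝ) hq'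
  have hφq : ∀ t, φ^[q'] t = t := by
    intro t
    apply hc_inj
    rw [hiter q' t]
    have h1 : ((q' : ℝ) * ((p : ℝ) / (q : ℝ)) : ℝ) = ((p : ℤ) : ℝ) := by
      rw [hq'R]
      field_simp
    rw [h1, int_coe_zero p]
    simp [Prod.ext_iff]
  -- lift φ to ℝ
  have hgu : UniformContinuous (fun x : ℝ => φ ((x : ℝ) : UnitAddCircle)) :=
    (CompactSpace.uniformContinuous_of_continuous hφcont).comp uniformContinuous_coe
  obtain ⟨ψ, hψcont, hψ⟩ := exists_lift _ hgu
  -- coordinates of ctilde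
  set c1 : ℝ → ℝ := fun x => (ctilde x).1 with hc1
  set c2 : ℝ → ℝ := fun x => (ctilde x).2 with hc2
  have hc1cont : Continuous c1 := continuous_fst.comp hct_cont
  have hc2cont : Continuous c2 := continuous_snd.comp hct_cont
  have hl1 : ∀ x : ℝ, ((c1 x : ℝ) : UnitAddCircle) = (c ((x : ℝ) : UnitAddCircle)).1 :=
    fun x => congrArg Prod.fst (hlift x)
  have hl2 : ∀ x : ℝ, ((c2 x : ℝ) : UnitAddCircle) = (c ((x : ℝ) : UnitAddCircle)).2 :=
    fun x => congrArg Prod.snd (hlift x)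
  have hψiter : ∀ (j : ℕ) (x : ℝ), ((ψ^[j] x : ℝ) : UnitAddCircle) =
      φ^[j] ((x : ℝ) : UnitAddCircle) := by
    intro j
    induction j with
    | zero => intro x; simp
    | succ j ih =>
        intro x
        rw [Function.iterate_succ_apply', Function.iterate_succ_apply', hψ, ih x]
  -- the constant m  (second coordinate increment under ψ)
  have hint2 : ∀ x : ℝ, ∃ n : ℤ, c2 (ψ x) - c2 x = (n : ℝ) := by
    intro x
    rw [← coe_zero_iff]
    rw [AddCircle.coe_sub, hl2, hl2, hψ, hφ']
    simp
  have hconst2 : ∀ x, c2 (ψ x) - c2 x = c2 (ψ 0) - c2 0 :=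
    const_of_int (f := fun x => c2 (ψ x) - c2 x) ((hc2cont.comp hψcont).sub hc2cont) hint2
  obtain ⟨m, hm⟩ := hint2 0
  have hstep2 : ∀ x, c2 (ψ x) = c2 x + (m : ℝ) := by
    intro x
    have := hconst2 x
    rw [hm] at this
    linarith
  -- the constant a  (first coordinate increment under ψ)
  have hconst1 : ∀ x, c1 (ψ x) - c1 x = c1 (ψ 0) - c1 0 := by
    have hint1 : ∀ x : ℝ, ∃ n : ℤ, (c1 (ψ x) - c1 x) - (c1 (ψ 0) - c1 0) = (n : ℝ) := by
      intro x
      rw [← coe_zero_iff]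
      rw [AddCircle.coe_sub, AddCircle.coe_sub, AddCircle.coe_sub, hl1, hl1, hl1, hl1,
        hψ, hψ, hφ', hφ']
      simp
    have hF := const_of_int (f := fun x => (c1 (ψ x) - c1 x) - (c1 (ψ 0) - c1 0))
      ((((hc1cont.comp hψcont).sub hc1cont).sub continuous_const)) hint1
    intro x
    have := hF x
    simp at this
    linarith [hF x]
  set a : ℝ := c1 (ψ 0) - c1 0 with ha
  have hstep1 : ∀ x, c1 (ψ x) = c1 x + a := by
    intro x
    have := hconst1 x
    linarith
  have hacoe : ((a : ℝ) : UnitAddCircle) = α := by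
    rw [ha, AddCircle.coe_sub, hl1, hl1, hψ, hφ']
    simp
  obtain ⟨m₁, hm₁⟩ : ∃ n : ℤ, a - (p : ℝ) / (q : ℝ) = (n : ℝ) := by
    rw [← coe_zero_iff, AddCircle.coe_sub, hacoe, hα, sub_self]
  -- periodicity of c1, c2
  have hcoe_per : ∀ x : ℝ, (((x + 1 : ℝ)) : UnitAddCircle) = ((x : ℝ) : UnitAddCircle) :=
    fun x => AddCircle.coe_add_period 1 x
  have hper2 : ∀ x, c2 (x + 1) = c2 x + (l : ℝ) := by
    have hint : ∀ x : ℝ, ∃ n : ℤ, c2 (x + 1) - c2 x = (n : ℝ) := by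
      intro x
      rw [← coe_zero_iff, AddCircle.coe_sub, hl2, hl2, hcoe_per]
      simp
    have hconst := const_of_int (f := fun x => c2 (x + 1) - c2 x)
      ((hc2cont.comp (continuous_id.add continuous_const)).sub hc2cont) hint
    have h0 : c2 (0 + 1) - c2 0 = (l : ℝ) := by
      have h5 := congrArg Prod.snd hkl
      simp only [Prod.snd_sub] at h5
      simp only [hc2]
      norm_num
      rw [← h5]
    intro x
    have h6 := hconst x
    linarith [h0]
  have hper1 : ∀ x, c1 (x + 1) = c1 x + (k : ℝ) := by
    have hint : ∀ x : ℝ, ∃ n : ℤ, c1 (x + 1) - c1 x = (n : ℝ) := by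
      intro x
      rw [← coe_zero_iff, AddCircle.coe_sub, hl1, hl1, hcoe_per]
      simp
    have hconst := const_of_int (f := fun x => c1 (x + 1) - c1 x)
      ((hc1cont.comp (continuous_id.add continuous_const)).sub hc1cont) hint
    have h0 : c1 (0 + 1) - c1 0 = (k : ℝ) := by
      have h5 := congrArg Prod.fst hkl
      simp only [Prod.fst_sub] at h5
      simp only [hc1]
      norm_num
      rw [← h5]
    intro x
    have h6 := hconst x
    linarith [h0]
  -- ψ^[q'] is translation by an integer n
  have hψq_int : ∀ x : ℝ, ∃ n : ℤ, ψ^[q'] x - x = (n : ℝ) := by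
    intro x
    rw [← coe_zero_iff, AddCircle.coe_sub, hψiter, hφq]
    simp
  have hψq_const : ∀ x, ψ^[q'] x - x = ψ^[q'] 0 - 0 :=
    const_of_int (f := fun x => ψ^[q'] x - x) ((hψcont.iterate q').sub continuous_id) hψq_int
  obtain ⟨n, hn⟩ := hψq_int 0
  have hψq : ∀ x, ψ^[q'] x = x + (n : ℝ) := by
    intro x
    have h1 := hψq_const x
    rw [sub_zero] at h1
    rw [sub_zero] at hn
    rw [hn] at h1
    linarith
  -- iterate the step relations
  have hiter2 : ∀ (j : ℕ) (x : ℝ), c2 (ψ^[j] x) = c2 x + (j : ℝ) * (m : ℝ) := by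
    intro j
    induction j with
    | zero => intro x; simp
    | succ j ih =>
        intro x
        rw [Function.iterate_succ_apply', hstep2, ih x]
        push_cast
        ring
  have hiter1 : ∀ (j : ℕ) (x : ℝ), c1 (ψ^[j] x) = c1 x + (j : ℝ) * a := by
    intro j
    induction j with
    | zero => intro x; simp
    | succ j ih =>
        intro x
        rw [Function.iterate_succ_apply', hstep1, ih x]
        push_cast
        ring
  -- integer translation of c1, c2
  have htrans2 : ∀ (j : ℤ) (x : ℝ), c2 (x + (j : ℝ)) = c2 x + (j : ℝ) * (l : ℝ) := by
    intro j
    induction j using Int.induction_on with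
    | zero => intro x; simp
    | succ j ih =>
        intro x
        have h2 := hper2 (x + (j : ℝ))
        have h3 := ih x
        push_cast at h3 ⊢
        have harg : x + ((j:ℝ) + 1) = (x + (j:ℝ)) + 1 := by ring
        rw [harg, h2, h3]
        ring
    | pred j ih =>
        intro x
        have harg : (x + (-(j : ℝ) - 1)) + 1 = x + (-(j : ℝ)) := by ring
        have h2 := hper2 (x + (-(j : ℝ) - 1))
        rw [harg] at h2
        have h3 := ih x
        push_cast at h3 ⊢
        linarith
  have htrans1 : ∀ (j : ℤ) (x : ℝ), c1 (x + (j : ℝ)) = c1 x + (j : ℝ) * (k : ℝ) := by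
    intro j
    induction j using Int.induction_on with
    | zero => intro x; simp
    | succ j ih =>
        intro x
        have h2 := hper1 (x + (j : ℝ))
        have h3 := ih x
        push_cast at h3 ⊢
        have harg : x + ((j:ℝ) + 1) = (x + (j:ℝ)) + 1 := by ring
        rw [harg, h2, h3]
        ring
    | pred j ih =>
        intro x
        have harg : (x + (-(j : ℝ) - 1)) + 1 = x + (-(j : ℝ)) := by ring
        have h2 := hper1 (x + (-(j : ℝ) - 1))
        rw [harg] at h2
        have h3 := ih x
        push_cast at h3 ⊢
        linarith
  -- evaluate at 0
  have he2 : (n : ℝ) * (l : ℝ) = (q' : ℝ) * (m : ℝ) := by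
    have h1 := hiter2 q' 0
    rw [hψq 0] at h1
    have h2 := htrans2 n 0
    rw [h2] at h1
    linarith
  have he1 : (n : ℝ) * (k : ℝ) = (p : ℝ) + (q : ℝ) * (m₁ : ℝ) := by
    have h1 := hiter1 q' 0
    rw [hψq 0] at h1
    have h2 := htrans1 n 0
    rw [h2] at h1
    have h3 : (q' : ℝ) * a = (p : ℝ) + (q : ℝ) * (m₁ : ℝ) := by
      have : a = (p : ℝ) / (q : ℝ) + (m₁ : ℝ) := by linarith [hm₁]
      rw [this, hq'R]
      field_simp
    linarith
  -- integer identities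
  have he2' : n * l = (q' : ℤ) * m := by exact_mod_cast he2
  have he1' : n * k = p + q * m₁ := by exact_mod_cast he1
  rw [hq'] at he2'
  -- number theory conclusion
  have hgd : (Int.gcd n q : ℤ) ∣ p := by
    have h1 : (Int.gcd n q : ℤ) ∣ n * k := Dvd.dvd.mul_right (Int.gcd_dvd_left n q) k
    have h2 : (Int.gcd n q : ℤ) ∣ q * m₁ := Dvd.dvd.mul_right (Int.gcd_dvd_right n q) m₁
    have : p = n * k - q * m₁ := by linarith [he1']
    rw [this]
    exact dvd_sub h1 h2
  have hgcd1 : Int.gcd n q = 1 := by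
    have h1 : (Int.gcd n q : ℤ) ∣ (Int.gcd p q : ℤ) :=
      Int.dvd_coe_gcd hgd (Int.gcd_dvd_right n q)
    rw [hpq] at h1
    have h2 : Int.gcd n q ∣ 1 := by exact_mod_cast h1
    exact Nat.dvd_one.mp h2
  have hcop : IsCoprime (q : ℤ) n := by
    rw [Int.isCoprime_iff_gcd_eq_one, Int.gcd_comm]
    exact hgcd1
  have hdvd : q ∣ n * l := ⟨m, he2'.trans (by ring)⟩
  exact hcop.dvd_of_dvd_mul_left hdvd
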